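/- Let (S,V,E,I,Q,H,R) be a solution of the SVEIQHR model with values in [0,∞)⁷, and set N(t) = S(t)+V(t)+E(t)+I(t)+Q(t)+H(t)+R(t). Then N is a bounded function of t ≥ 0, and limsup_{t→∞} N(t) ≤ (λ+λ')/μ. -/

import Mathlib

open Real Filter Polynomial Matrix

theorem stmt3
    (lam lam' mu mu' beta alpha theta gamma phi kappa tau : ℝ)
    (delta u1 u2 u3 u4 u5 : ℝ)
    (hlam : 0 < lam) (hlam' : 0 < lam') (hmu : 0 < mu) (hmu' : 0 < mu')
    (hbeta : 0 < beta) (halpha : 0 < alpha) (htheta : 0 < theta)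
    (hgamma : 0 < gamma) (hphi : 0 < phi) (hkappa : 0 < kappa) (htau : 0 < tau)
    (hdelta : delta ∈ Set.Icc (0:ℝ) 1) (hu1 : u1 ∈ Set.Icc (0:ℝ) 1)
    (hu2 : u2 ∈ Set.Icc (0:ℝ) 1) (hu3 : u3 ∈ Set.Icc (0:ℝ) 1)
    (hu4 : u4 ∈ Set.Icc (0:ℝ) 1) (hu5 : u5 ∈ Set.Icc (0:ℝ) 1)
    (S V E I Q H R : ℝ → ℝ)
    (hS : ∀ t ≥ (0:ℝ), HasDerivAt S (lam + alpha * R t - (1 - u2) * beta * S t * I t - u1 * S t - mu * S t) t)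
    (hV : ∀ t ≥ (0:ℝ), HasDerivAt V (u1 * S t - (1 - delta) * beta * V t * I t - mu * V t) t)
    (hE : ∀ t ≥ (0:ℝ), HasDerivAt E ((1 - u2) * beta * S t * I t + (1 - delta) * beta * V t * I t - (theta + u3 + mu) * E t) t)
    (hI : ∀ t ≥ (0:ℝ), HasDerivAt I (theta * E t - (gamma + u4 + u5 + mu + mu') * I t) t)
    (hQ : ∀ t ≥ (0:ℝ), HasDerivAt Q (lam' + u3 * E t + u4 * I t - (kappa + tau + mu) * Q t) t)
    (hH : ∀ t ≥ (0:ℝ), HasDerivAt H (tau * Q t + u5 * I t - (phi + mu + mu') * H t) t)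
    (hR : ∀ t ≥ (0:ℝ), HasDerivAt R (gamma * I t + kappa * Q t + phi * H t - (alpha + mu) * R t) t)
    (hpos : ∀ t ≥ (0:ℝ), 0 ≤ S t ∧ 0 ≤ V t ∧ 0 ≤ E t ∧ 0 ≤ I t ∧ 0 ≤ Q t ∧ 0 ≤ H t ∧ 0 ≤ R t) :
    (∃ C : ℝ, ∀ t ≥ (0:ℝ), |S t + V t + E t + I t + Q t + H t + R t| ≤ C) ∧
      Filter.limsup (fun t => S t + V t + E t + I t + Q t + H t + R t) Filter.atTop
        ≤ (lam + lam') / mu := by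

  classical
  set N : ℝ → ℝ := fun t => S t + V t + E t + I t + Q t + H t + R t with hNdef
  set A : ℝ := (lam + lam') / mu with hAdef
  have hmuA : mu * A = lam + lam' := by
    rw [hAdef]; field_simp
  -- derivative of N
  have hN : ∀ t ≥ (0:ℝ), HasDerivAt N
      (lam + lam' - mu * N t - mu' * (I t + H t)) t := by
    intro t ht
    have h := ((((((hS t ht).add (hV t ht)).add (hE t ht)).add (hI t ht)).add
      (hQ t ht)).add (hH t ht)).add (hR t ht)
    refine HasDerivAt.congr_deriv h ?_
    simp only [hNdef]
    ring
  -- the auxiliary function g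
  set g : ℝ → ℝ := fun t => (N t - A) * Real.exp (mu * t) with hgdef
  have hg : ∀ t ≥ (0:ℝ), HasDerivAt g
      ((lam + lam' - mu * N t - mu' * (I t + H t)) * Real.exp (mu * t)
        + (N t - A) * (Real.exp (mu * t) * mu)) t := by
    intro t ht
    have hexp : HasDerivAt (fun t => Real.exp (mu * t)) (Real.exp (mu * t) * mu) t := by
      have := (Real.hasDerivAt_exp (mu * t)).comp t ((hasDerivAt_id t).const_mul mu)
      simpa [mul_comm, Function.comp_def] using this
    exact ((hN t ht).sub_const A).mul hexp
  have hg_cont : ContinuousOn g (Set.Ici 0) := by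
    intro t ht
    exact ((hg t ht).continuousAt).continuousWithinAt
  have hg_anti : AntitoneOn g (Set.Ici 0) := by
    apply antitoneOn_of_deriv_nonpos (convex_Ici 0) hg_cont
    · intro x hx
      rw [interior_Ici] at hx
      exact ((hg x (le_of_lt hx)).differentiableAt).differentiableWithinAt
    · intro x hx
      rw [interior_Ici] at hx
      have hx' : (0:ℝ) ≤ x := le_of_lt hx
      rw [(hg x hx').deriv]
      have hIH : 0 ≤ I x + H x := by
        obtain ⟨_, _, _, hI0, _, hH0, _⟩ := hpos x hx'
        linarith
      have hE : (0:ℝ) < Real.exp (mu * x) := Real.exp_pos _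
      have : (lam + lam' - mu * N x - mu' * (I x + H x)) * Real.exp (mu * x)
          + (N x - A) * (Real.exp (mu * x) * mu)
          = (lam + lam' - mu * A - mu' * (I x + H x)) * Real.exp (mu * x) := by ring
      rw [this, hmuA]
      have : lam + lam' - (lam + lam') - mu' * (I x + H x) ≤ 0 := by nlinarith
      exact mul_nonpos_of_nonpos_of_nonneg this hE.le
  -- key inequality
  have key : ∀ t ≥ (0:ℝ), N t ≤ A + (N 0 - A) * Real.exp (-(mu * t)) := by
    intro t ht
    have h := hg_anti (Set.self_mem_Ici) (Set.mem_Ici.mpr ht) ht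
    simp only [hgdef] at h
    have hE : (0:ℝ) < Real.exp (mu * t) := Real.exp_pos _
    have hE0 : Real.exp (mu * 0) = 1 := by simp
    rw [hE0, mul_one] at h
    have hneg : Real.exp (-(mu * t)) = (Real.exp (mu * t))⁻¹ := by
      rw [Real.exp_neg]
    rw [hneg]
    have h1 := mul_le_mul_of_nonneg_right h (inv_nonneg.mpr hE.le)
    rw [mul_assoc, mul_inv_cancel₀ (ne_of_gt hE), mul_one] at h1
    linarith
  have hNnonneg : ∀ t ≥ (0:ℝ), 0 ≤ N t := by
    intro t ht
    obtain ⟨h1, h2, h3, h4, h5, h6, h7⟩ := hpos t ht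
    simp only [hNdef]; linarith
  constructor
  · refine ⟨A + |N 0 - A|, fun t ht => ?_⟩
    have h1 := key t ht
    have h2 := hNnonneg t ht
    have hEle : Real.exp (-(mu * t)) ≤ 1 := by
      apply Real.exp_le_one_iff.mpr
      nlinarith
    have hEpos : (0:ℝ) < Real.exp (-(mu * t)) := Real.exp_pos _
    have habs : (N 0 - A) * Real.exp (-(mu * t)) ≤ |N 0 - A| := by
      calc (N 0 - A) * Real.exp (-(mu * t)) ≤ |N 0 - A| * Real.exp (-(mu * t)) := by
            exact mul_le_mul_of_nonneg_right (le_abs_self _) hEpos.le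
        _ ≤ |N 0 - A| * 1 := by
            exact mul_le_mul_of_nonneg_left hEle (abs_nonneg _)
        _ = |N 0 - A| := mul_one _
    rw [abs_of_nonneg h2]
    show N t ≤ A + |N 0 - A|
    linarith
  · have htend : Tendsto (fun t => A + (N 0 - A) * Real.exp (-(mu * t))) atTop (nhds A) := by
      have h1 : Tendsto (fun t : ℝ => mu * t) atTop atTop :=
        Tendsto.const_mul_atTop hmu tendsto_id
      have h2 : Tendsto (fun t : ℝ => Real.exp (-(mu * t))) atTop (nhds 0) := by
        exact Real.tendsto_exp_neg_atTop_nhds_zero.comp h1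
      have := (tendsto_const_nhds (x := A)).add ((tendsto_const_nhds (x := N 0 - A)).mul h2)
      simpa using this
    have hev : (fun t => S t + V t + E t + I t + Q t + H t + R t)
        ≤ᶠ[atTop] fun t => A + (N 0 - A) * Real.exp (-(mu * t)) := by
      filter_upwards [eventually_ge_atTop (0:ℝ)] with t ht
      exact key t ht
    have hcobdd : IsCoboundedUnder (· ≤ ·)
        atTop (fun t => S t + V t + E t + I t + Q t + H t + R t) := by
      apply IsBoundedUnder.isCoboundedUnder_le (α := ℝ)
      refine ⟨0, eventually_map.mpr ?_⟩
      filter_upwards [eventually_ge_atTop (0:ℝ)] with t ht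
      exact hNnonneg t ht
    have hbdd : IsBoundedUnder (· ≤ ·)
        atTop (fun t => A + (N 0 - A) * Real.exp (-(mu * t))) :=
      htend.isBoundedUnder_le
    calc Filter.limsup (fun t => S t + V t + E t + I t + Q t + H t + R t) atTop
        ≤ Filter.limsup (fun t => A + (N 0 - A) * Real.exp (-(mu * t))) atTop :=
          limsup_le_limsup hev hcobdd hbdd
      _ = A := htend.limsup_eq
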